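/- Let (G,χ) be a coloured graph that is g_1-sparse, i.e., |F| ≤ (|V(F)| - ω(F)) + min{k(F), |V(F)| - 2} for every nonempty F ⊆ E. Then for each colour c, if there exists a (c,1)-tight edge set (a nonempty F ⊆ E with |F| = (|V(F)| - ω(F)) + k(F) and c appearing among the colours of V(F)), there is a unique inclusionwise minimal (c,1)-tight set. -/

import Mathlib

open Finset

attribute [local instance] Classical.propDecidable

noncomputable section

variable {V C : Type*}

/-- The set of vertices spanned by an edge set. -/
def eVerts [Fintype V] [DecidableEq V] (F : Finset (Sym2 V)) : Finset V :=
  Finset.univ.filter fun v => ∃ e ∈ F, v ∈ e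

/-- The set of colours appearing on the vertices spanned by an edge set. -/
def eCols [Fintype V] [DecidableEq V] [DecidableEq C] (χ : V → Option C)
    (F : Finset (Sym2 V)) : Finset C :=
  (eVerts F).biUnion fun v => (χ v).toFinset

/-- The number of colours appearing on the vertices spanned by an edge set. -/
def kCount [Fintype V] [DecidableEq V] [DecidableEq C] (χ : V → Option C)
    (F : Finset (Sym2 V)) : ℤ :=
  (eCols χ F).card

/-- The set of all colours used by the colouring. -/
def usedCols [Fintype V] [DecidableEq C] (χ : V → Option C) : Finset C :=
  Finset.univ.biUnion fun v => (χ v).toFinset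

/-- The number of connected components of the graph `(V(F), F)`. -/
def omegaCount [Fintype V] [DecidableEq V] (F : Finset (Sym2 V)) : ℤ :=
  ((eVerts F).image fun v =>
    (eVerts F).filter fun u =>
      (SimpleGraph.fromEdgeSet (↑F : Set (Sym2 V))).Reachable v u).card

/-- The function `h_d(F) = min{k(F), |V(F)| - (d+1)}`. -/
def hFun [Fintype V] [DecidableEq V] [DecidableEq C] (χ : V → Option C) (d : ℕ)
    (F : Finset (Sym2 V)) : ℤ :=
  min (kCount χ F) (((eVerts F).card : ℤ) - (d + 1))

/-- A vertex is colour-isolated if it is coloured and no other vertex has its colour. -/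
def ColourIsolated (χ : V → Option C) (v : V) : Prop :=
  ∃ c, χ v = some c ∧ ∀ u, u ≠ v → χ u ≠ some c

/-- `F` is `(c,1)`-tight: nonempty, inside `E`, `|F| = (|V(F)| - ω(F)) + k(F)`,
and colour `c` appears on `V(F)`. -/
def CTight1 {V C : Type*} [Fintype V] [DecidableEq V] [DecidableEq C]
    (χ : V → Option C) (E : Finset (Sym2 V)) (c : C) (F : Finset (Sym2 V)) : Prop :=
  F.Nonempty ∧ F ⊆ E ∧
    (F.card : ℤ) = (((eVerts F).card : ℤ) - omegaCount F) + kCount χ F ∧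
    c ∈ eCols χ F

section AuxA
variable [Fintype V] [DecidableEq V]

lemma mem_eVerts {F : Finset (Sym2 V)} {v : V} : v ∈ eVerts F ↔ ∃ e ∈ F, v ∈ e := by
  simp [eVerts]

lemma eVerts_mono {F1 F2 : Finset (Sym2 V)} (h : F1 ⊆ F2) : eVerts F1 ⊆ eVerts F2 := by
  intro v hv
  rw [mem_eVerts] at hv ⊢
  obtain ⟨e, he, hve⟩ := hv
  exact ⟨e, h he, hve⟩

lemma eVerts_union (F1 F2 : Finset (Sym2 V)) : eVerts (F1 ∪ F2) = eVerts F1 ∪ eVerts F2 := by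
  ext v
  simp only [mem_eVerts, Finset.mem_union]
  constructor
  · rintro ⟨e, he | he, hv⟩
    · exact Or.inl ⟨e, he, hv⟩
    · exact Or.inr ⟨e, he, hv⟩
  · rintro (⟨e, he, hv⟩ | ⟨e, he, hv⟩)
    · exact ⟨e, Or.inl he, hv⟩
    · exact ⟨e, Or.inr he, hv⟩

lemma mem_eVerts_left {F : Finset (Sym2 V)} {u v : V} (h : s(u,v) ∈ F) : u ∈ eVerts F :=
  mem_eVerts.2 ⟨_, h, Sym2.mem_mk_left u v⟩

lemma mem_eVerts_right {F : Finset (Sym2 V)} {u v : V} (h : s(u,v) ∈ F) : v ∈ eVerts F :=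
  mem_eVerts.2 ⟨_, h, Sym2.mem_mk_right u v⟩

end AuxA

section Span
variable [Fintype V] [DecidableEq V]

def dset (F : Finset (Sym2 V)) : Set (V → ℚ) :=
  {x | ∃ u v : V, s(u,v) ∈ F ∧ x = Pi.single u 1 - Pi.single v 1}

def fSpan (F : Finset (Sym2 V)) : Submodule ℚ (V → ℚ) := Submodule.span ℚ (dset F)

def rk (F : Finset (Sym2 V)) : ℤ := (Module.finrank ℚ (fSpan F) : ℤ)

lemma dset_mono {F1 F2 : Finset (Sym2 V)} (h : F1 ⊆ F2) : dset F1 ⊆ dset F2 := by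
  rintro x ⟨u, v, huv, rfl⟩
  exact ⟨u, v, h huv, rfl⟩

lemma dset_union (F1 F2 : Finset (Sym2 V)) : dset (F1 ∪ F2) = dset F1 ∪ dset F2 := by
  ext x
  constructor
  · rintro ⟨u, v, huv, rfl⟩
    rcases Finset.mem_union.1 huv with h | h
    · exact Or.inl ⟨u, v, h, rfl⟩
    · exact Or.inr ⟨u, v, h, rfl⟩
  · rintro (⟨u, v, h, rfl⟩ | ⟨u, v, h, rfl⟩)
    · exact ⟨u, v, Finset.mem_union_left _ h, rfl⟩
    · exact ⟨u, v, Finset.mem_union_right _ h, rfl⟩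

lemma rk_empty : rk (∅ : Finset (Sym2 V)) = 0 := by
  have : dset (∅ : Finset (Sym2 V)) = ∅ := by
    ext x; simp [dset]
  rw [rk, fSpan, this]
  simp

lemma rk_submod (F1 F2 : Finset (Sym2 V)) : rk (F1 ∪ F2) + rk (F1 ∩ F2) ≤ rk F1 + rk F2 := by
  have h1 : fSpan (F1 ∪ F2) = fSpan F1 ⊔ fSpan F2 := by
    rw [fSpan, dset_union, Submodule.span_union]; rfl
  have h2 : fSpan (F1 ∩ F2) ≤ fSpan F1 ⊓ fSpan F2 := by
    apply le_inf
    · exact Submodule.span_mono (dset_mono Finset.inter_subset_left)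
    · exact Submodule.span_mono (dset_mono Finset.inter_subset_right)
  have key := Submodule.finrank_sup_add_finrank_inf_eq (fSpan F1) (fSpan F2)
  have hmono := Submodule.finrank_mono h2
  rw [rk, rk, rk, rk, h1]
  have := Submodule.finrank_mono h2
  push_cast
  omega

end Span

set_option linter.unusedSectionVars false

section Identity
variable [Fintype V] [DecidableEq V]

variable (F : Finset (Sym2 V))


lemma adj_mem (hF : ∀ e ∈ F, ¬ e.IsDiag) {u v : V} (h : (SimpleGraph.fromEdgeSet (↑F : Set (Sym2 V))).Adj u v) : s(u,v) ∈ F := by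
  exact ((SimpleGraph.fromEdgeSet_adj _).1 h).1

lemma mem_adj (hF : ∀ e ∈ F, ¬ e.IsDiag) {u v : V} (h : s(u,v) ∈ F) : (SimpleGraph.fromEdgeSet (↑F : Set (Sym2 V))).Adj u v := by
  refine (SimpleGraph.fromEdgeSet_adj _).2 ⟨h, ?_⟩
  intro huv
  exact hF _ h (by simp [huv])

lemma reach_sub_mem {v u : V} (h : (SimpleGraph.fromEdgeSet (↑F : Set (Sym2 V))).Reachable v u) :
    (Pi.single v 1 - Pi.single u 1 : V → ℚ) ∈ fSpan F := by
  obtain ⟨p⟩ := h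
  induction p with
  | nil => simp
  | @cons a b c hab p ih =>
    have h1 : (Pi.single a 1 - Pi.single b 1 : V → ℚ) ∈ fSpan F :=
      Submodule.subset_span ⟨a, b, ((SimpleGraph.fromEdgeSet_adj _).1 hab).1, rfl⟩
    have := Submodule.add_mem _ h1 ih
    simpa using this

lemma walk_end_mem {v u : V} (p : (SimpleGraph.fromEdgeSet (↑F : Set (Sym2 V))).Walk v u) : v = u ∨ u ∈ eVerts F := by
  induction p with
  | nil => exact Or.inl rfl
  | @cons a b c hab p ih =>
    rcases ih with rfl | h
    · exact Or.inr (mem_eVerts_right ((SimpleGraph.fromEdgeSet_adj _).1 hab).1)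
    · exact Or.inr h

lemma reach_mem_eVerts {v u : V} (hv : v ∈ eVerts F) (h : (SimpleGraph.fromEdgeSet (↑F : Set (Sym2 V))).Reachable v u) : u ∈ eVerts F := by
  obtain ⟨p⟩ := h
  rcases walk_end_mem F p with rfl | h
  · exact hv
  · exact h

lemma rank_omega (F : Finset (Sym2 V)) (hF : ∀ e ∈ F, ¬ e.IsDiag) :
    ((eVerts F).card : ℤ) - omegaCount F = rk F := by
  classical
  set Gf := SimpleGraph.fromEdgeSet (↑F : Set (Sym2 V)) with hGf
  set ρ : V → V := fun v => Quot.out (Gf.connectedComponentMk v) with hρ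
  have mk_rho : ∀ v, Gf.connectedComponentMk (ρ v) = Gf.connectedComponentMk v :=
    fun v => Quot.out_eq _
  have reach_rho : ∀ v, Gf.Reachable v (ρ v) :=
    fun v => (SimpleGraph.ConnectedComponent.exact (mk_rho v)).symm
  have rho_reach_eq : ∀ {u v : V}, Gf.Reachable u v → ρ u = ρ v := by
    intro u v h
    simp only [hρ]
    rw [SimpleGraph.ConnectedComponent.sound h]
  have rho_idem : ∀ v, ρ (ρ v) = ρ v := fun v => rho_reach_eq (reach_rho v).symm
  set B : Finset V := (eVerts F).image ρ with hB
  have hBsub : B ⊆ eVerts F := by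
    intro w hw
    obtain ⟨v, hv, rfl⟩ := Finset.mem_image.1 hw
    exact reach_mem_eVerts F hv (reach_rho v)
  set S : Finset V := eVerts F \ B with hS
  set b : ↥S → (V → ℚ) := fun v => Pi.single v.1 1 - Pi.single (ρ v.1) 1 with hb
  have hrhoB : ∀ v ∈ eVerts F, ρ v ∈ B := fun v hv => Finset.mem_image_of_mem _ hv
  have hSnotB : ∀ v : ↥S, v.1 ∉ B := fun v => (Finset.mem_sdiff.1 v.2).2
  have hSvert : ∀ v : ↥S, v.1 ∈ eVerts F := fun v => (Finset.mem_sdiff.1 v.2).1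
  have hind : LinearIndependent ℚ b := by
    rw [linearIndependent_iff']
    intro s g hsum i hi
    have h0 := congrFun hsum i.1
    rw [Finset.sum_apply] at h0
    have h1 : ∀ j ∈ s, (g j • b j) i.1 = if j = i then g j else 0 := by
      intro j hj
      have hji : (Pi.single (ρ j.1) (1:ℚ) : V → ℚ) i.1 = 0 := by
        apply Pi.single_eq_of_ne
        intro h
        exact hSnotB i (h ▸ hrhoB j.1 (hSvert j))
      by_cases hij : j = i
      · subst hij
        simp [hb, hji, Pi.single_eq_same]
      · have hne : i.1 ≠ j.1 := fun h => hij (Subtype.ext h.symm)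
        have : (Pi.single j.1 (1:ℚ) : V → ℚ) i.1 = 0 := Pi.single_eq_of_ne hne _
        simp [hb, hji, this, hij]
    rw [Finset.sum_congr rfl h1, Finset.sum_ite_eq' s i g] at h0
    rw [if_pos hi] at h0
    simpa using h0
  have hbmem : ∀ v : ↥S, b v ∈ fSpan F := fun v => reach_sub_mem F (reach_rho v.1)
  have haux : ∀ w ∈ eVerts F,
      (Pi.single w 1 - Pi.single (ρ w) 1 : V → ℚ) ∈ Submodule.span ℚ (Set.range b) := by
    intro w hw
    by_cases hwB : w ∈ B
    · obtain ⟨x, hx, rfl⟩ := Finset.mem_image.1 hwB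
      rw [rho_idem x]
      simp
    · exact Submodule.subset_span ⟨⟨w, Finset.mem_sdiff.2 ⟨hw, hwB⟩⟩, rfl⟩
  have hspan : Submodule.span ℚ (Set.range b) = fSpan F := by
    apply le_antisymm
    · rw [Submodule.span_le]
      rintro x ⟨v, rfl⟩
      exact hbmem v
    · rw [fSpan, Submodule.span_le]
      rintro x ⟨u, v, huv, rfl⟩
      have hu : u ∈ eVerts F := mem_eVerts_left huv
      have hv : v ∈ eVerts F := mem_eVerts_right huv
      have hr : ρ u = ρ v := rho_reach_eq (mem_adj F hF huv).reachable
      have hsub := Submodule.sub_mem _ (haux u hu) (haux v hv)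
      rw [hr] at hsub
      show (_ : V → ℚ) ∈ Submodule.span ℚ (Set.range b)
      convert hsub using 1
      abel
  have hrk : rk F = (S.card : ℤ) := by
    rw [rk, ← hspan, finrank_span_eq_card hind, Fintype.card_coe]
  have hout_inj : Function.Injective (Quot.out : Gf.ConnectedComponent → V) := by
    intro a c h
    rw [← Quot.out_eq a, ← Quot.out_eq c, h]
  set mkI : Finset Gf.ConnectedComponent := (eVerts F).image Gf.connectedComponentMk with hmkI
  set g : Gf.ConnectedComponent → Finset V :=
    fun comp => (eVerts F).filter (fun u => Gf.connectedComponentMk u = comp) with hg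
  have homega : omegaCount F = (B.card : ℤ) := by
    have e1 : ((eVerts F).image fun v =>
        (eVerts F).filter fun u => Gf.Reachable v u) = mkI.image g := by
      rw [hmkI, Finset.image_image]
      apply Finset.image_congr
      intro v hv
      ext u
      simp only [hg, Function.comp_apply, Finset.mem_filter]
      constructor
      · rintro ⟨hu, hr⟩
        exact ⟨hu, SimpleGraph.ConnectedComponent.sound hr.symm⟩
      · rintro ⟨hu, hr⟩
        exact ⟨hu, (SimpleGraph.ConnectedComponent.exact hr).symm⟩
    have e2 : (mkI.image g).card = mkI.card := by
      apply Finset.card_image_of_injOn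
      intro c1 hc1 c2 hc2 hgc
      obtain ⟨v1, hv1, rfl⟩ := Finset.mem_image.1 hc1
      have hv1' : v1 ∈ g (Gf.connectedComponentMk v1) := by
        rw [hg]; exact Finset.mem_filter.2 ⟨hv1, rfl⟩
      rw [hgc] at hv1'
      rw [hg] at hv1'
      exact (Finset.mem_filter.1 hv1').2.symm ▸ rfl
    have e3 : B.card = mkI.card := by
      have : B = mkI.image Quot.out := by
        rw [hB, hmkI]
        exact (Finset.image_image (f := Gf.connectedComponentMk) (g := Quot.out) (s := eVerts F)).symm
      rw [this]
      exact Finset.card_image_of_injective _ hout_inj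
    rw [omegaCount, e1]
    rw [e2, e3]
  have hcard : S.card + B.card = (eVerts F).card := by
    rw [hS, Finset.card_sdiff_of_subset hBsub]
    have := Finset.card_le_card hBsub
    omega
  rw [homega, hrk]
  push_cast
  omega

end Identity


section Cols
variable [Fintype V] [DecidableEq V] [DecidableEq C]

lemma eCols_union (χ : V → Option C) (F1 F2 : Finset (Sym2 V)) :
    eCols χ (F1 ∪ F2) = eCols χ F1 ∪ eCols χ F2 := by
  rw [eCols, eCols, eCols, eVerts_union]
  ext x
  simp only [Finset.mem_biUnion, Finset.mem_union]
  constructor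
  · rintro ⟨v, hv | hv, hxv⟩
    · exact Or.inl ⟨v, hv, hxv⟩
    · exact Or.inr ⟨v, hv, hxv⟩
  · rintro (⟨v, hv, hxv⟩ | ⟨v, hv, hxv⟩)
    · exact ⟨v, Or.inl hv, hxv⟩
    · exact ⟨v, Or.inr hv, hxv⟩

lemma eCols_mono (χ : V → Option C) {F1 F2 : Finset (Sym2 V)} (h : F1 ⊆ F2) :
    eCols χ F1 ⊆ eCols χ F2 := by
  intro x hx
  rw [eCols, Finset.mem_biUnion] at hx ⊢
  obtain ⟨v, hv, hxv⟩ := hx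
  exact ⟨v, eVerts_mono h hv, hxv⟩

end Cols

/-- in a `g₁`-sparse coloured graph, for each colour `c`, if a `(c,1)`-tight
set exists then there is a unique inclusionwise minimal `(c,1)`-tight set. -/
theorem g1_sparse_unique_minimal_tight {V C : Type*} [Fintype V] [DecidableEq V] [DecidableEq C]
    (G : SimpleGraph V) (χ : V → Option C)
    (E : Finset (Sym2 V)) (hE : ∀ e, e ∈ E ↔ e ∈ G.edgeSet)
    (hsparse : ∀ F ⊆ E, F.Nonempty →
      (F.card : ℤ) ≤ (((eVerts F).card : ℤ) - omegaCount F)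
        + min (kCount χ F) (((eVerts F).card : ℤ) - 2))
    (c : C) (hex : ∃ F, CTight1 χ E c F) :
    ∃! F, CTight1 χ E c F ∧ ∀ F', CTight1 χ E c F' → F' ⊆ F → F' = F := by
  classical
  have hnd : ∀ F : Finset (Sym2 V), F ⊆ E → ∀ e ∈ F, ¬ e.IsDiag :=
    fun F hFE e he => G.not_isDiag_of_mem_edgeSet ((hE e).1 (hFE he))
  have hid : ∀ F : Finset (Sym2 V), F ⊆ E →
      (((eVerts F).card : ℤ) - omegaCount F) = rk F := fun F h => rank_omega F (hnd F h)
  have key : ∀ F1 F2, CTight1 χ E c F1 → CTight1 χ E c F2 → CTight1 χ E c (F1 ∩ F2) := by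
    intro F1 F2 h1 h2
    obtain ⟨hne1, hE1, heq1, hc1⟩ := h1
    obtain ⟨hne2, hE2, heq2, hc2⟩ := h2
    rw [hid F1 hE1] at heq1
    rw [hid F2 hE2] at heq2
    have hEu : F1 ∪ F2 ⊆ E := Finset.union_subset hE1 hE2
    have hEi : F1 ∩ F2 ⊆ E := fun x hx => hE1 (Finset.mem_inter.1 hx).1
    have hsub := rk_submod F1 F2
    have hki : eCols χ (F1 ∩ F2) ⊆ eCols χ F1 ∩ eCols χ F2 :=
      Finset.subset_inter (eCols_mono χ Finset.inter_subset_left)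
        (eCols_mono χ Finset.inter_subset_right)
    have hki_card : (eCols χ (F1 ∩ F2)).card ≤ (eCols χ F1 ∩ eCols χ F2).card :=
      Finset.card_le_card hki
    have hck := Finset.card_union_add_card_inter (eCols χ F1) (eCols χ F2)
    have ks : kCount χ (F1 ∪ F2) + kCount χ (F1 ∩ F2) ≤ kCount χ F1 + kCount χ F2 := by
      rw [kCount, kCount, kCount, kCount, eCols_union]
      push_cast
      omega
    have huNe : (F1 ∪ F2).Nonempty := by
      obtain ⟨e0, he0⟩ := hne1
      exact ⟨e0, Finset.mem_union_left _ he0⟩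
    have hspu := hsparse (F1 ∪ F2) hEu huNe
    rw [hid _ hEu] at hspu
    have hminu := min_le_left (kCount χ (F1 ∪ F2)) (((eVerts (F1 ∪ F2)).card : ℤ) - 2)
    have hcardiu : ((F1 ∪ F2).card : ℤ) + ((F1 ∩ F2).card : ℤ) = (F1.card : ℤ) + F2.card := by
      have := Finset.card_union_add_card_inter F1 F2
      push_cast
      omega
    have hne : (F1 ∩ F2).Nonempty := by
      by_contra hcon
      rw [Finset.not_nonempty_iff_eq_empty] at hcon
      have hcardu : ((F1 ∪ F2).card : ℤ) = (F1.card : ℤ) + F2.card := by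
        rw [hcon] at hcardiu
        simpa using hcardiu
      have ku1 : kCount χ (F1 ∪ F2) ≤ kCount χ F1 + kCount χ F2 - 1 := by
        have hip : 1 ≤ (eCols χ F1 ∩ eCols χ F2).card :=
          Finset.card_pos.2 ⟨c, Finset.mem_inter.2 ⟨hc1, hc2⟩⟩
        rw [kCount, kCount, kCount, eCols_union]
        push_cast
        omega
      rw [hcon, rk_empty] at hsub
      linarith
    have hspi := hsparse (F1 ∩ F2) hEi hne
    rw [hid _ hEi] at hspi
    have hmini := min_le_left (kCount χ (F1 ∩ F2)) (((eVerts (F1 ∩ F2)).card : ℤ) - 2)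
    have e1 : ((F1 ∩ F2).card : ℤ) = rk (F1 ∩ F2) + kCount χ (F1 ∩ F2) := by
      linarith
    have ke : kCount χ (F1 ∩ F2) = ((eCols χ F1 ∩ eCols χ F2).card : ℤ) := by
      have hle : kCount χ (F1 ∩ F2) ≤ ((eCols χ F1 ∩ eCols χ F2).card : ℤ) := by
        rw [kCount]; exact_mod_cast hki_card
      have hge : ((eCols χ F1 ∩ eCols χ F2).card : ℤ) ≤ kCount χ (F1 ∩ F2) := by
        have hku : kCount χ (F1 ∪ F2) = (((eCols χ F1 ∪ eCols χ F2).card : ℕ) : ℤ) := by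
          rw [kCount, eCols_union]
        have hck' : ((eCols χ F1 ∪ eCols χ F2).card : ℤ) + ((eCols χ F1 ∩ eCols χ F2).card : ℤ)
            = kCount χ F1 + kCount χ F2 := by
          rw [kCount, kCount]
          push_cast
          omega
        linarith
      exact le_antisymm hle hge
    have hcolseq : eCols χ (F1 ∩ F2) = eCols χ F1 ∩ eCols χ F2 := by
      apply Finset.eq_of_subset_of_card_le hki
      have : ((eCols χ F1 ∩ eCols χ F2).card : ℤ) ≤ ((eCols χ (F1 ∩ F2)).card : ℤ) := by
        rw [kCount] at ke
        omega
      exact_mod_cast this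
    refine ⟨hne, hEi, ?_, ?_⟩
    · rw [hid _ hEi]
      exact e1
    · rw [hcolseq]
      exact Finset.mem_inter.2 ⟨hc1, hc2⟩
  obtain ⟨F0, hF0⟩ := hex
  have hT : F0 ∈ E.powerset.filter (fun F => CTight1 χ E c F) :=
    Finset.mem_filter.2 ⟨Finset.mem_powerset.2 hF0.2.1, hF0⟩
  obtain ⟨M, hMmem, hMmin⟩ :=
    Finset.exists_min_image (E.powerset.filter (fun F => CTight1 χ E c F))
      (fun F => F.card) ⟨F0, hT⟩
  have hMt : CTight1 χ E c M := (Finset.mem_filter.1 hMmem).2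
  have hMprop : ∀ F', CTight1 χ E c F' → F' ⊆ M → F' = M := by
    intro F' h' hsub'
    apply Finset.eq_of_subset_of_card_le hsub'
    exact hMmin F' (Finset.mem_filter.2 ⟨Finset.mem_powerset.2 h'.2.1, h'⟩)
  refine ⟨M, ⟨hMt, hMprop⟩, ?_⟩
  rintro F1 ⟨h1t, h1min⟩
  have hint := key F1 M h1t hMt
  have e1 : F1 ∩ M = F1 := h1min _ hint Finset.inter_subset_left
  have e2 : F1 ∩ M = M := hMprop _ hint Finset.inter_subset_right
  rw [← e1, e2]
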